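/- Let L ≥ 1 be a positive integer, let I, T, N, λ1 be positive reals, let σ_{y1},…,σ_{yL} be positive reals with Λhalf = diag(σ_{y1},…,σ_{yL}), and let λ3, λ4, τ3, τ4, C1, C2 be reals with λ3 − τ3 ≠ 0, λ4 − τ4 ≠ 0, λ3 + (L−1)τ3 ≠ 0, λ4 + (L−1)τ4 ≠ 0, and C1(λ4 + (L−1)τ4) − C2(λ3 + (L−1)τ3) ≠ 0. Let ω ∈ ℝ^L be the vector with entries ω_l = σ_{yl}·λ1^{1/2}. Then (I·T/N)·[C1·ω^⊤·Λhalf^{-1}·((λ3 − τ3)·I_L + τ3·J_L)^{-1}·Λhalf^{-1}·ω − C2·ω^⊤·Λhalf^{-1}·((λ4 − τ4)·I_L + τ4·J_L)^{-1}·Λhalf^{-1}·ω]^{-1} = (I·T/(L·N·λ1))·(λ3 + (L−1)τ3)·(λ4 + (L−1)τ4) / [C1(λ4 + (L−1)τ4) − C2(λ3 + (L−1)τ3)]. -/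

import Mathlib

open Matrix

/-- The u×u all-ones matrix over ℝ. -/
def allOnes (u : ℕ) : Matrix (Fin u) (Fin u) ℝ := Matrix.of fun _ _ => 1

lemma allOnes_mul_allOnes (L : ℕ) : allOnes L * allOnes L = (L : ℝ) • allOnes L := by
  ext i j
  simp [allOnes, Matrix.mul_apply, Finset.sum_const]

lemma inv_compound (L : ℕ) (a τ : ℝ) (h1 : a - τ ≠ 0)
    (hs : a + ((L : ℝ) - 1) * τ ≠ 0) :
    ((a - τ) • (1 : Matrix (Fin L) (Fin L) ℝ) + τ • allOnes L)⁻¹ =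
      (1 / (a - τ)) • (1 : Matrix (Fin L) (Fin L) ℝ) +
        (-(τ / ((a - τ) * (a + ((L : ℝ) - 1) * τ)))) • allOnes L := by
  apply Matrix.inv_eq_right_inv
  rw [Matrix.add_mul, Matrix.mul_add, Matrix.mul_add]
  simp only [Matrix.smul_mul, Matrix.mul_smul, Matrix.one_mul, Matrix.mul_one,
    allOnes_mul_allOnes, smul_smul]
  have e1 : (1 / (a - τ) * (a - τ)) = (1:ℝ) := by field_simp
  have e2 : (-(τ / ((a - τ) * (a + ((L:ℝ) - 1) * τ))) * (a - τ)) + (1 / (a - τ) * τ)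
      + (-(τ / ((a - τ) * (a + ((L:ℝ) - 1) * τ))) * (τ * (L:ℝ))) = 0 := by
    generalize hsd : a + ((L:ℝ) - 1) * τ = s at hs ⊢
    field_simp
    rw [← hsd]
    ring
  have comb : (-(τ / ((a - τ) * (a + ((L:ℝ) - 1) * τ))) * (a - τ)) • allOnes L +
      ((1 / (a - τ) * τ) • allOnes L +
        (-(τ / ((a - τ) * (a + ((L:ℝ) - 1) * τ))) * (τ * (L:ℝ))) • allOnes L) =
      ((-(τ / ((a - τ) * (a + ((L:ℝ) - 1) * τ))) * (a - τ)) + (1 / (a - τ) * τ)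
      + (-(τ / ((a - τ) * (a + ((L:ℝ) - 1) * τ))) * (τ * (L:ℝ)))) • allOnes L := by
    rw [add_smul, add_smul]; abel
  rw [add_assoc, comb, e1, e2, one_smul, zero_smul, add_zero]

lemma diag_inv (L : ℕ) (σ : Fin L → ℝ) (hσ : ∀ l, σ l ≠ 0) :
    (Matrix.diagonal σ)⁻¹ = Matrix.diagonal (fun l => (σ l)⁻¹) := by
  apply Matrix.inv_eq_right_inv
  rw [Matrix.diagonal_mul_diagonal]
  have : (fun i => σ i * (σ i)⁻¹) = fun _ : Fin L => (1 : ℝ) := by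
    funext i; exact mul_inv_cancel₀ (hσ i)
  rw [this, Matrix.diagonal_one]

lemma quad_key (L : ℕ) (σ : Fin L → ℝ) (hσ : ∀ l, σ l ≠ 0) (r a τ : ℝ)
    (h1 : a - τ ≠ 0) (hs : a + ((L : ℝ) - 1) * τ ≠ 0) :
    (fun l => σ l * r) ⬝ᵥ (((Matrix.diagonal σ)⁻¹ *
        ((a - τ) • (1 : Matrix (Fin L) (Fin L) ℝ) + τ • allOnes L)⁻¹ *
        (Matrix.diagonal σ)⁻¹) *ᵥ (fun l => σ l * r)) =
      r ^ 2 * (L : ℝ) / (a + ((L : ℝ) - 1) * τ) := by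
  rw [inv_compound L a τ h1 hs, diag_inv L σ hσ]
  set b := 1 / (a - τ) with hb
  set c := -(τ / ((a - τ) * (a + ((L : ℝ) - 1) * τ))) with hc
  rw [← Matrix.mulVec_mulVec, ← Matrix.mulVec_mulVec]
  have hDv : Matrix.diagonal (fun l => (σ l)⁻¹) *ᵥ (fun l => σ l * r) = fun _ => r := by
    funext i
    simp only [Matrix.mulVec_diagonal]
    rw [show (σ i)⁻¹ * (σ i * r) = (σ i * (σ i)⁻¹) * r from by ring,
      mul_inv_cancel₀ (hσ i), one_mul]
  rw [hDv]
  have hMv : (b • (1 : Matrix (Fin L) (Fin L) ℝ) + c • allOnes L) *ᵥ (fun _ => r) =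
      fun _ => b * r + c * ((L : ℝ) * r) := by
    funext i
    simp only [Matrix.mulVec, dotProduct, Matrix.add_apply, Matrix.smul_apply,
      Matrix.one_apply, allOnes, Matrix.of_apply, smul_eq_mul, mul_one, add_mul,
      ite_mul, mul_ite, mul_zero, mul_one, one_mul, zero_mul, Finset.sum_add_distrib, Finset.sum_ite_eq,
      Finset.mem_univ, if_true, Finset.sum_const, Finset.card_univ,
      Fintype.card_fin, nsmul_eq_mul]
    ring
  rw [hMv]
  have hDv2 : Matrix.diagonal (fun l => (σ l)⁻¹) *ᵥ (fun _ => b * r + c * ((L : ℝ) * r)) =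
      fun l => (σ l)⁻¹ * (b * r + c * ((L : ℝ) * r)) := by
    funext i; simp [Matrix.mulVec_diagonal]
  rw [hDv2]
  have : (fun l => σ l * r) ⬝ᵥ (fun l => (σ l)⁻¹ * (b * r + c * ((L : ℝ) * r))) =
      ∑ l : Fin L, r * (b * r + c * ((L : ℝ) * r)) := by
    unfold dotProduct
    apply Finset.sum_congr rfl
    intro l _
    rw [show σ l * r * ((σ l)⁻¹ * (b * r + c * ((L:ℝ) * r))) =
      (σ l * (σ l)⁻¹) * (r * (b * r + c * ((L:ℝ) * r))) from by ring,
      mul_inv_cancel₀ (hσ l), one_mul]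
  rw [this, Finset.sum_const, Finset.card_univ, Fintype.card_fin, nsmul_eq_mul, hb, hc]
  generalize hsd : a + ((L:ℝ) - 1) * τ = s at hs ⊢
  field_simp
  rw [← hsd]
  ring

/-- closed-cohort design: under common ICC values across endpoints, the general variance expression
for the common intervention effect estimator simplifies to the closed form of the stated closed form. -/
theorem common_effect_variance_closed_form_closed_cohort
    (L : ℕ) (hL : 1 ≤ L) (I T N lam1 : ℝ)
    (hI : 0 < I) (hT : 0 < T) (hN : 0 < N) (hlam1 : 0 < lam1)
    (σ : Fin L → ℝ) (hσ : ∀ l, 0 < σ l)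
    (lam3 lam4 tau3 tau4 C1 C2 : ℝ)
    (h1 : lam3 - tau3 ≠ 0) (h2 : lam4 - tau4 ≠ 0)
    (h3 : lam3 + ((L : ℝ) - 1) * tau3 ≠ 0) (h4 : lam4 + ((L : ℝ) - 1) * tau4 ≠ 0)
    (h5 : C1 * (lam4 + ((L : ℝ) - 1) * tau4) - C2 * (lam3 + ((L : ℝ) - 1) * tau3) ≠ 0)
    (ω : Fin L → ℝ) (hω : ∀ l, ω l = σ l * Real.sqrt lam1) :
    (I * T / N) *
      (C1 * (ω ⬝ᵥ (((Matrix.diagonal σ)⁻¹ *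
              ((lam3 - tau3) • (1 : Matrix (Fin L) (Fin L) ℝ) + tau3 • allOnes L)⁻¹ *
              (Matrix.diagonal σ)⁻¹) *ᵥ ω)) -
       C2 * (ω ⬝ᵥ (((Matrix.diagonal σ)⁻¹ *
              ((lam4 - tau4) • (1 : Matrix (Fin L) (Fin L) ℝ) + tau4 • allOnes L)⁻¹ *
              (Matrix.diagonal σ)⁻¹) *ᵥ ω)))⁻¹ =
    I * T / ((L : ℝ) * N * lam1) *
      (lam3 + ((L : ℝ) - 1) * tau3) * (lam4 + ((L : ℝ) - 1) * tau4) /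
      (C1 * (lam4 + ((L : ℝ) - 1) * tau4) - C2 * (lam3 + ((L : ℝ) - 1) * tau3)) := by
  have hσ' : ∀ l, σ l ≠ 0 := fun l => (hσ l).ne'
  have hω' : ω = fun l => σ l * Real.sqrt lam1 := funext hω
  rw [hω', quad_key L σ hσ' _ lam3 tau3 h1 h3, quad_key L σ hσ' _ lam4 tau4 h2 h4,
    Real.sq_sqrt hlam1.le]
  have hL0 : (L : ℝ) ≠ 0 := Nat.cast_ne_zero.mpr (by omega)
  have key : C1 * (lam1 * (L : ℝ) / (lam3 + ((L : ℝ) - 1) * tau3)) -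
      C2 * (lam1 * (L : ℝ) / (lam4 + ((L : ℝ) - 1) * tau4)) =
      lam1 * (L : ℝ) * (C1 * (lam4 + ((L : ℝ) - 1) * tau4) -
        C2 * (lam3 + ((L : ℝ) - 1) * tau3)) /
      ((lam3 + ((L : ℝ) - 1) * tau3) * (lam4 + ((L : ℝ) - 1) * tau4)) := by
    field_simp
  rw [key, inv_div]
  field_simp
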